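/- Let f : ℝⁿ → ℝ have K-Lipschitz gradient, and let (x₀ᵗ), (x₁ᵗ), t = 0,…,T, be two sequences with x_iᵗ = x_iᵗ⁻¹ + α·sign(∇f(x_iᵗ⁻¹)) (same signed-gradient update rule). Then |f(x₁^T) − f(x₁⁰)| ≤ Σ_{t=1}^{T} [ α‖∇f(x₀ᵗ⁻¹)‖₁ + √n αK‖x₁ᵗ⁻¹ − x₀ᵗ⁻¹‖₂ + (K/2)α²n ]. -/

import Mathlib

private lemma mul_sign_eq_abs (r : ℝ) : r * Real.sign r = |r| := by
  rcases lt_trichotomy r 0 with h | h | h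
  · rw [Real.sign_of_neg h, abs_of_neg h]; ring
  · simp [h]
  · rw [Real.sign_of_pos h, abs_of_pos h]; ring

private lemma l1_le_sqrt_mul_l2 {n : ℕ} (y : EuclideanSpace ℝ (Fin n)) :
    ∑ i, |y i| ≤ Real.sqrt n * ‖y‖ := by
  have h1 : (∑ i, |y i|) ^ 2 ≤ n * ∑ i, |y i| ^ 2 := by
    simpa using sq_sum_le_card_mul_sum_sq (s := Finset.univ) (f := fun i => |y i|)
  have h2 : ‖y‖ ^ 2 = ∑ i, |y i| ^ 2 := by
    rw [EuclideanSpace.norm_eq, Real.sq_sqrt (by positivity)]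
    exact Finset.sum_congr rfl fun i _ => by rw [Real.norm_eq_abs]
  have h3 : (∑ i, |y i|) ^ 2 ≤ (Real.sqrt n * ‖y‖) ^ 2 := by
    rw [mul_pow, Real.sq_sqrt (by positivity), h2]; exact h1
  have h4 : (0:ℝ) ≤ ∑ i, |y i| := by positivity
  have h5 := Real.sqrt_le_sqrt h3
  rwa [Real.sqrt_sq h4, Real.sqrt_sq (by positivity)] at h5

private lemma descent_lemma {E : Type*} [NormedAddCommGroup E] [InnerProductSpace ℝ E]
    [CompleteSpace E] (f : E → ℝ) (K : ℝ) (_hK : 0 ≤ K) (hdiff : Differentiable ℝ f)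
    (hlip : ∀ u v : E, ‖gradient f u - gradient f v‖ ≤ K * ‖u - v‖) (x v : E) :
    |f (x + v) - f x - inner ℝ (gradient f x) v| ≤ K / 2 * ‖v‖ ^ 2 := by
  set c : ℝ := inner ℝ (gradient f x) v with hc
  have key : ∀ t : ℝ, HasDerivAt (fun t : ℝ => f (x + t • v) - t * c - f x)
      ((inner ℝ (gradient f (x + t • v)) v : ℝ) - c) t := by
    intro t
    have h1 : HasDerivAt (fun t : ℝ => x + t • v) v t := by
      simpa using ((hasDerivAt_id t).smul_const v).const_add x
    have hg : HasFDerivAt f ((InnerProductSpace.toDual ℝ E) (gradient f (x + t • v)))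
        (x + t • v) := hasGradientAt_iff_hasFDerivAt.mp (hdiff _).hasGradientAt
    have h2 := hg.comp_hasDerivAt t h1
    have h3 : HasDerivAt (fun t : ℝ => t * c + f x) c t := by
      simpa using ((hasDerivAt_id t).mul_const c).add_const (f x)
    have := h2.sub h3
    exact this.congr_of_eventuallyEq (Filter.Eventually.of_forall fun s => by simp [sub_sub])
  have hB : ∀ t : ℝ, HasDerivAt (fun t : ℝ => K / 2 * ‖v‖ ^ 2 * t ^ 2) (K * ‖v‖ ^ 2 * t) t := by
    intro t
    have := (hasDerivAt_pow 2 t).const_mul (K / 2 * ‖v‖ ^ 2)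
    exact this.congr_deriv (by ring)
  have bound : ∀ t ∈ Set.Ico (0:ℝ) 1,
      ‖(inner ℝ (gradient f (x + t • v)) v : ℝ) - c‖ ≤ K * ‖v‖ ^ 2 * t := by
    intro t ht
    rw [hc, ← inner_sub_left, Real.norm_eq_abs]
    calc |(inner ℝ (gradient f (x + t • v) - gradient f x) v : ℝ)|
        ≤ ‖gradient f (x + t • v) - gradient f x‖ * ‖v‖ := abs_real_inner_le_norm _ _
      _ ≤ (K * ‖x + t • v - x‖) * ‖v‖ := by
          exact mul_le_mul_of_nonneg_right (hlip _ _) (norm_nonneg v)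
      _ = K * ‖v‖ ^ 2 * t := by
          rw [add_sub_cancel_left, norm_smul, Real.norm_eq_abs, abs_of_nonneg ht.1]; ring
  have main := image_norm_le_of_norm_deriv_right_le_deriv_boundary
    (f := fun t : ℝ => f (x + t • v) - t * c - f x)
    (f' := fun t : ℝ => (inner ℝ (gradient f (x + t • v)) v : ℝ) - c)
    (a := 0) (b := 1)
    (fun t _ => (key t).continuousAt.continuousWithinAt)
    (fun t _ => (key t).hasDerivWithinAt)
    (B := fun t => K / 2 * ‖v‖ ^ 2 * t ^ 2) (B' := fun t => K * ‖v‖ ^ 2 * t)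
    (by simp) hB bound
  have h1 := main (Set.right_mem_Icc.mpr zero_le_one)
  simpa [Real.norm_eq_abs, sub_sub, add_comm] using h1

/-- Multi-step version of Theorem 2 with explicit second-order error terms: the total
change of prediction at `x₁` under a `T`-step signed-gradient attack is bounded via the
gradient ℓ¹-norms along the trajectory of a neighboring point `x₀`. -/
theorem multi_step_attack_change_bound {n : ℕ}
    (f : EuclideanSpace ℝ (Fin n) → ℝ) (K α : ℝ) (T : ℕ)
    (hdiff : Differentiable ℝ f) (hα : 0 < α)
    (hlip : ∀ u v : EuclideanSpace ℝ (Fin n),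
      ‖gradient f u - gradient f v‖ ≤ K * ‖u - v‖)
    (x₀ x₁ : ℕ → EuclideanSpace ℝ (Fin n))
    (hx₀ : ∀ t < T, x₀ (t + 1) =
      x₀ t + α • (WithLp.equiv 2 (Fin n → ℝ)).symm (fun i => Real.sign (gradient f (x₀ t) i)))
    (hx₁ : ∀ t < T, x₁ (t + 1) =
      x₁ t + α • (WithLp.equiv 2 (Fin n → ℝ)).symm (fun i => Real.sign (gradient f (x₁ t) i))) :
    |f (x₁ T) - f (x₁ 0)| ≤
      ∑ t ∈ Finset.range T,
        (α * (∑ i, |gradient f (x₀ t) i|) +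
          Real.sqrt n * α * K * ‖x₁ t - x₀ t‖ + K / 2 * α ^ 2 * n) := by
  rcases Nat.eq_zero_or_pos n with hn | hn
  · subst hn
    have h0 : x₁ T = x₁ 0 := Subsingleton.elim _ _
    simp [h0]
  have hK : 0 ≤ K := by
    have h := hlip (EuclideanSpace.single (⟨0, hn⟩ : Fin n) (1:ℝ)) 0
    have hnorm : ‖(EuclideanSpace.single (⟨0, hn⟩ : Fin n) (1:ℝ)) - 0‖ = 1 := by
      rw [sub_zero, EuclideanSpace.norm_single]; norm_num
    rw [hnorm, mul_one] at h
    exact le_trans (norm_nonneg _) h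
  -- one-step bound
  have step : ∀ t, t < T → |f (x₁ (t + 1)) - f (x₁ t)| ≤
      α * (∑ i, |gradient f (x₀ t) i|) +
        Real.sqrt n * α * K * ‖x₁ t - x₀ t‖ + K / 2 * α ^ 2 * n := by
    intro t ht
    set x : EuclideanSpace ℝ (Fin n) := x₁ t with hxdef
    set v : EuclideanSpace ℝ (Fin n) :=
      α • (WithLp.equiv 2 (Fin n → ℝ)).symm (fun i => Real.sign (gradient f x i)) with hv
    have hvi : ∀ i, v i = α * Real.sign (gradient f x i) := by
      intro i; simp [hv]
    have hstep : x₁ (t + 1) = x + v := hx₁ t ht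
    have hdesc := descent_lemma f K hK hdiff hlip x v
    have hinner : (inner ℝ (gradient f x) v : ℝ) = α * ∑ i, |gradient f x i| := by
      rw [PiLp.inner_apply, Finset.mul_sum]
      refine Finset.sum_congr rfl fun i _ => ?_
      rw [RCLike.inner_apply, starRingEnd_apply, star_trivial, hvi i,
        ← mul_sign_eq_abs (gradient f x i)]
      ring
    have hnormv : ‖v‖ ^ 2 ≤ α ^ 2 * n := by
      have h1 : ‖v‖ ^ 2 = ∑ i, (α * Real.sign (gradient f x i)) ^ 2 := by
        rw [EuclideanSpace.norm_eq, Real.sq_sqrt (by positivity)]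
        exact Finset.sum_congr rfl fun i _ => by rw [hvi i, Real.norm_eq_abs, sq_abs]
      rw [h1]
      calc ∑ i, (α * Real.sign (gradient f x i)) ^ 2 ≤ ∑ _i : Fin n, α ^ 2 := by
            refine Finset.sum_le_sum fun i _ => ?_
            have hs : Real.sign (gradient f x i) ^ 2 ≤ 1 := by
              rcases Real.sign_apply_eq (gradient f x i) with h | h | h <;> rw [h] <;> norm_num
            rw [mul_pow]
            nlinarith [sq_nonneg α]
        _ = α ^ 2 * n := by simp [mul_comm]
    have htrans : ∑ i, |gradient f x i| ≤
        ∑ i, |gradient f (x₀ t) i| + Real.sqrt n * (K * ‖x - x₀ t‖) := by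
      have h1 : ∀ i, |gradient f x i| ≤
          |gradient f (x₀ t) i| + |(gradient f x - gradient f (x₀ t)) i| := by
        intro i
        have : (gradient f x - gradient f (x₀ t)) i = gradient f x i - gradient f (x₀ t) i := by
          simp
        rw [this]
        simpa using abs_add_le (gradient f (x₀ t) i) (gradient f x i - gradient f (x₀ t) i)
      calc ∑ i, |gradient f x i|
          ≤ ∑ i, (|gradient f (x₀ t) i| + |(gradient f x - gradient f (x₀ t)) i|) :=
            Finset.sum_le_sum fun i _ => h1 i
        _ = ∑ i, |gradient f (x₀ t) i| + ∑ i, |(gradient f x - gradient f (x₀ t)) i| :=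
            Finset.sum_add_distrib
        _ ≤ ∑ i, |gradient f (x₀ t) i| + Real.sqrt n * ‖gradient f x - gradient f (x₀ t)‖ :=
            add_le_add_right (l1_le_sqrt_mul_l2 _) _
        _ ≤ _ :=
            add_le_add_right (mul_le_mul_of_nonneg_left (hlip _ _) (Real.sqrt_nonneg _)) _
    rw [hstep]
    have hc_nonneg : (0:ℝ) ≤ α * ∑ i, |gradient f x i| := by positivity
    calc |f (x + v) - f x|
        ≤ |f (x + v) - f x - inner ℝ (gradient f x) v| + |(inner ℝ (gradient f x) v : ℝ)| := by
          have h6 := abs_add_le (f (x + v) - f x - (inner ℝ (gradient f x) v : ℝ))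
            ((inner ℝ (gradient f x) v : ℝ))
          simpa using h6
      _ ≤ K / 2 * ‖v‖ ^ 2 + α * ∑ i, |gradient f x i| := by
          rw [hinner] at hdesc
          rw [hinner, abs_of_nonneg hc_nonneg]
          exact add_le_add_left hdesc _
      _ ≤ K / 2 * (α ^ 2 * n) +
            α * (∑ i, |gradient f (x₀ t) i| + Real.sqrt n * (K * ‖x - x₀ t‖)) := by
          have g1 : K / 2 * ‖v‖ ^ 2 ≤ K / 2 * (α ^ 2 * n) :=
            mul_le_mul_of_nonneg_left hnormv (by linarith)
          have g2 := mul_le_mul_of_nonneg_left htrans (le_of_lt hα)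
          linarith
      _ = α * (∑ i, |gradient f (x₀ t) i|) +
            Real.sqrt n * α * K * ‖x - x₀ t‖ + K / 2 * α ^ 2 * n := by ring
  -- telescoping
  have tel : ∀ m, m ≤ T → |f (x₁ m) - f (x₁ 0)| ≤
      ∑ t ∈ Finset.range m,
        (α * (∑ i, |gradient f (x₀ t) i|) +
          Real.sqrt n * α * K * ‖x₁ t - x₀ t‖ + K / 2 * α ^ 2 * n) := by
    intro m
    induction m with
    | zero => simp
    | succ k ih =>
      intro hk
      have hkT : k < T := hk
      calc |f (x₁ (k + 1)) - f (x₁ 0)|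
          ≤ |f (x₁ (k + 1)) - f (x₁ k)| + |f (x₁ k) - f (x₁ 0)| := abs_sub_le _ _ _
        _ ≤ (α * (∑ i, |gradient f (x₀ k) i|) +
              Real.sqrt n * α * K * ‖x₁ k - x₀ k‖ + K / 2 * α ^ 2 * n) +
            ∑ t ∈ Finset.range k,
              (α * (∑ i, |gradient f (x₀ t) i|) +
                Real.sqrt n * α * K * ‖x₁ t - x₀ t‖ + K / 2 * α ^ 2 * n) :=
            add_le_add (step k hkT) (ih (le_of_lt hkT))
        _ = _ := by rw [Finset.sum_range_succ]; ring
  exact tel T le_rfl
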